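/- Let C be a category with all small limits. Then the category Prod(C) of formal products of objects of C has all small limits. -/

import Mathlib

open CategoryTheory Limits

universe v u

/-- The category of formal products of objects of `C`. -/
structure FormalProd (C : Type u) [Category.{v} C] : Type (max u (v + 1)) where
  ι : Type v
  obj : ι → C

namespace FormalProd

variable {C : Type u} [Category.{v} C]

instance : Category.{v} (FormalProd C) where
  Hom A B := Σ r : B.ι → A.ι, ∀ j : B.ι, A.obj (r j) ⟶ B.obj j
  id A := ⟨fun i => i, fun i => 𝟙 (A.obj i)⟩
  comp {A B D} f g := ⟨fun k => f.1 (g.1 k), fun k => f.2 (g.1 k) ≫ g.2 k⟩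
  id_comp f := by obtain ⟨r, φ⟩ := f; simp
  comp_id f := by obtain ⟨r, φ⟩ := f; simp
  assoc f g h := by simp

/-- The index map of a morphism of formal products. -/
def Hom.index {A B : FormalProd C} (f : A ⟶ B) : B.ι → A.ι := f.1

/-- The components of a morphism of formal products. -/
def Hom.component {A B : FormalProd C} (f : A ⟶ B) (j : B.ι) :
    A.obj (Hom.index f j) ⟶ B.obj j := f.2 j

end FormalProd

namespace FormalProdLimitsAux

variable {C : Type u} [Category.{v} C]

lemma homExt {A B : FormalProd C} (f g : A ⟶ B) (h1 : f.1 = g.1)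
    (h2 : ∀ j, f.2 j = eqToHom (by rw [h1]) ≫ g.2 j) : f = g := by
  obtain ⟨r, φ⟩ := f; obtain ⟨r', φ'⟩ := g
  dsimp at h1; subst h1
  simp only [eqToHom_refl, Category.id_comp] at h2
  congr 1
  funext j
  exact h2 j

lemma homCongr {A B : FormalProd C} {f g : A ⟶ B} (h : f = g) (j : B.ι) :
    f.2 j = eqToHom (by rw [h]) ≫ g.2 j := by subst h; simp

lemma id_snd (A : FormalProd C) (i : A.ι) : (𝟙 A : A ⟶ A).2 i = 𝟙 (A.obj i) := rfl

lemma comp_fst {A B D : FormalProd C} (f : A ⟶ B) (g : B ⟶ D) (k : D.ι) :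
    (f ≫ g).1 k = f.1 (g.1 k) := rfl

lemma comp_snd {A B D : FormalProd C} (f : A ⟶ B) (g : B ⟶ D) (k : D.ι) :
    (f ≫ g).2 k = f.2 (g.1 k) ≫ g.2 k := rfl

lemma comp_eqToHom {A B : FormalProd C} {f g : A ⟶ B} (h : f = g) (j : B.ι) {X : C}
    (h1 : X = A.obj (f.1 j)) (h2 : X = A.obj (g.1 j)) :
    eqToHom h1 ≫ f.2 j = eqToHom h2 ≫ g.2 j := by subst h; rfl

lemma eq_conj {X Y₁ Y₂ Z : C} (h1 : X = Y₁) (h2 : X = Y₂) (α : Y₁ ⟶ Z) (β : Y₂ ⟶ Z)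
    (hab : eqToHom (h1.symm.trans h2) ≫ β = α) : eqToHom h1 ≫ α = eqToHom h2 ≫ β := by
  subst h1; subst h2; simpa using hab.symm

variable {J : Type v} [Category.{v} J] (F : J ⥤ FormalProd C)

def Gf : Jᵒᵖ ⥤ Type v where
  obj j := (F.obj j.unop).ι
  map f := TypeCat.ofHom (fun i => (F.map f.unop).1 i)
  map_id j := by
    apply TypeCat.Hom.ext; apply TypeCat.Fun.ext
    funext i
    exact congrFun (congrArg Sigma.fst (F.map_id j.unop)) i
  map_comp f g := by
    apply TypeCat.Hom.ext; apply TypeCat.Fun.ext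
    funext i
    exact congrFun (congrArg Sigma.fst (F.map_comp g.unop f.unop)) i

def Φ : (Gf F).Elementsᵒᵖ ⥤ C where
  obj p := (F.obj p.unop.1.unop).obj p.unop.2
  map {p q} f :=
    eqToHom (congrArg (F.obj p.unop.1.unop).obj f.unop.2.symm) ≫ (F.map f.unop.1.unop).2 q.unop.2
  map_id p := by
    refine (comp_eqToHom (F.map_id p.unop.1.unop) p.unop.2 _ rfl).trans ?_
    simp [id_snd]
    rfl
  map_comp {p q r} f g := by
    obtain ⟨⟨jq, iq⟩⟩ := q
    obtain ⟨⟨gel, hg⟩⟩ := g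
    obtain ⟨⟨fel, hf⟩⟩ := f
    dsimp only [Opposite.unop_op] at gel fel hg hf ⊢
    change (Gf F).map gel r.unop.2 = iq at hg
    subst hg
    refine (comp_eqToHom (F.map_comp fel.unop gel.unop) r.unop.2 _
      (congrArg (F.obj _).obj hf).symm).trans ?_
    simp only [comp_snd, Category.assoc, eqToHom_refl, Category.id_comp]
    erw [Category.id_comp, Category.assoc]
    rfl

variable [HasLimits C]

def fiber (x : colimit (Gf F)) : Type v :=
  ObjectProperty.FullSubcategory (fun p : (Gf F).Elementsᵒᵖ => colimit.ι (Gf F) p.unop.1 p.unop.2 = x)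

instance (x : colimit (Gf F)) : Category.{v} (fiber F x) := by
  dsimp [fiber]; infer_instance

def fiberIncl (x : colimit (Gf F)) : fiber F x ⥤ C :=
  ObjectProperty.ι _ ⋙ Φ F

noncomputable def Lpt : FormalProd C := ⟨colimit (Gf F), fun x => limit (fiberIncl F x)⟩

noncomputable def coneπ (j : J) : Lpt F ⟶ F.obj j :=
  ⟨fun i => colimit.ι (Gf F) (Opposite.op j) i,
   fun i => limit.π (fiberIncl F _) ⟨Opposite.op ⟨Opposite.op j, i⟩, rfl⟩⟩

lemma pi_eqToHom {x y : colimit (Gf F)} (h : x = y) (p : (Gf F).Elementsᵒᵖ)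
    (hp : colimit.ι (Gf F) p.unop.1 p.unop.2 = y) :
    eqToHom (show (Lpt F).obj x = (Lpt F).obj y by rw [h]) ≫
      limit.π (fiberIncl F y) ⟨p, hp⟩ =
    limit.π (fiberIncl F x) ⟨p, by rw [hp, h]⟩ := by
  subst h; simp
  exact Category.id_comp _

lemma cone_w {j j' : J} (f : j ⟶ j') : coneπ F j ≫ F.map f = coneπ F j' := by
  have hx : ∀ i', colimit.ι (Gf F) (Opposite.op j) ((F.map f).1 i') =
      colimit.ι (Gf F) (Opposite.op j') i' := fun i' =>
    ConcreteCategory.congr_hom (colimit.w (Gf F) f.op) i'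
  apply homExt
  case h1 => funext i'; exact hx i'
  intro i'
  rw [comp_snd]
  dsimp only [coneπ]
  erw [pi_eqToHom F (hx i')]
  have key := limit.w (fiberIncl F (colimit.ι (Gf F) (Opposite.op j) ((F.map f).1 i')))
    (show (⟨Opposite.op ⟨Opposite.op j, (Gf F).map f.op i'⟩, rfl⟩ :
        fiber F (colimit.ι (Gf F) (Opposite.op j) ((F.map f).1 i'))) ⟶
      ⟨Opposite.op ⟨Opposite.op j', i'⟩, (hx i').symm⟩ from
      ⟨Quiver.Hom.op ⟨f.op, rfl⟩⟩)
  rw [← key]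
  congr 1
  simp [fiberIncl, Φ]
  exact (Category.id_comp _).symm

noncomputable def coneF : Cone F where
  pt := Lpt F
  π :=
    { app := coneπ F
      naturality := fun j j' f =>
        (Category.id_comp _).trans (cone_w F f).symm }

def descCocone (s : Cone F) : Cocone (Gf F) where
  pt := s.pt.ι
  ι :=
    { app := fun j => TypeCat.ofHom (fun i => (s.π.app j.unop).1 i)
      naturality := fun j j' f => by
        apply TypeCat.Hom.ext; apply TypeCat.Fun.ext
        funext i
        have h := congrFun (congrArg Sigma.fst (s.w f.unop)) i
        dsimp at h ⊢
        exact h }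

noncomputable def liftCone (s : Cone F) (x : colimit (Gf F)) : Cone (fiberIncl F x) where
  pt := s.pt.obj (colimit.desc (Gf F) (descCocone F s) x)
  π :=
    { app := fun p =>
        eqToHom (congrArg s.pt.obj
          ((congrArg (colimit.desc (Gf F) (descCocone F s)) p.property.symm).trans
            (ConcreteCategory.congr_hom (colimit.ι_desc (descCocone F s) p.obj.unop.1) p.obj.unop.2))) ≫
          (s.π.app p.obj.unop.1.unop).2 p.obj.unop.2
      naturality := fun p q e => by
        obtain ⟨⟨⟨j₁, i₁⟩⟩, hp⟩ := p
        obtain ⟨⟨⟨j₂, i₂⟩⟩, hq⟩ := q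
        obtain ⟨⟨⟨gel, hg⟩⟩⟩ := e
        dsimp only [Opposite.unop_op] at gel hg hp hq ⊢
        change (Gf F).map gel i₂ = i₁ at hg
        subst hg
        dsimp [fiberIncl, Φ]
        simp only [Category.id_comp, Category.assoc]
        apply eq_conj
        have key := homCongr (s.w gel.unop) i₂
        erw [comp_snd] at key
        rw [← Category.id_comp ((F.map gel.unop).snd i₂)] at key
        dsimp only [Gf]
        erw [key]
        simp
        erw [eqToHom_trans_assoc]
        rfl
      }

noncomputable def liftHom (s : Cone F) : s.pt ⟶ Lpt F :=
  ⟨colimit.desc (Gf F) (descCocone F s),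
   fun (x : colimit (Gf F)) => limit.lift (fiberIncl F x) (liftCone F s x)⟩

lemma lift_fac (s : Cone F) (j : J) : liftHom F s ≫ coneπ F j = s.π.app j := by
  apply homExt
  case h1 =>
    funext i
    exact ConcreteCategory.congr_hom (colimit.ι_desc (descCocone F s) (Opposite.op j)) i
  intro i
  rw [comp_snd]
  dsimp only [liftHom, coneπ]
  erw [limit.lift_π]
  rfl

lemma lift_uniq (s : Cone F) (m : s.pt ⟶ Lpt F)
    (hm : ∀ j, m ≫ coneπ F j = s.π.app j) : m = liftHom F s := by
  have h1 : m.1 = (liftHom F s).1 := by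
    funext x
    obtain ⟨j, i, rfl⟩ := Types.jointly_surjective (Gf F) (colimit.isColimit _) x
    have h := congrFun (congrArg Sigma.fst (hm j.unop)) i
    erw [comp_fst] at h
    dsimp only [coneπ] at h
    refine h.trans ?_
    exact (ConcreteCategory.congr_hom (colimit.ι_desc (descCocone F s) j) i).symm
  apply homExt _ _ h1
  intro (x : colimit (Gf F))
  apply limit.hom_ext
  intro p
  obtain ⟨⟨⟨j, i⟩⟩, hp⟩ := p
  subst hp
  dsimp only [liftHom]
  erw [Category.assoc, limit.lift_π]
  have key := homCongr (hm j.unop) i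
  erw [comp_snd] at key
  dsimp only [coneπ] at key
  erw [key]
  simp [liftCone]
  erw [eqToHom_trans_assoc]
  rfl

noncomputable def isLimitConeF : IsLimit (coneF F) where
  lift s := liftHom F s
  fac s j := lift_fac F s j
  uniq s m hm := lift_uniq F s m (fun j => hm j)

end FormalProdLimitsAux

/-- If `C` has all small limits, then the category `Prod(C)` of formal products of
objects of `C` has all small limits. -/
theorem formalProd_hasLimits (C : Type u) [Category.{v} C] [HasLimits C] :
    HasLimits (FormalProd C) := by
  constructor
  intro J _
  constructor
  intro F
  exact HasLimit.mk ⟨FormalProdLimitsAux.coneF F, FormalProdLimitsAux.isLimitConeF F⟩
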